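/- For every real ν ≥ 1/2 and every complex z with Re z > 0, the modified Bessel function of the first kind satisfies |I_ν(z)| ≤ |z/Re z|^ν I_ν(Re z). -/

import Mathlib

/-- The modified Bessel function of the first kind `I_ν(z)` via the Poisson integral
representation `I_ν(z) = (1/(√π Γ(ν+1/2))) (z/2)^ν ∫_{-1}^1 (1-t²)^{ν-1/2} e^{zt} dt`. -/
noncomputable def besselI (ν : ℝ) (z : ℂ) : ℂ :=
  (1 / ((Real.sqrt Real.pi : ℂ) * (Real.Gamma (ν + 1/2) : ℂ))) * (z / 2) ^ (ν : ℂ) *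
    ∫ t in (-1:ℝ)..1, (((1 - t ^ 2 : ℝ) ^ (ν - 1/2) : ℝ) : ℂ) * Complex.exp (z * (t : ℂ))

/-- The real-valued `I_ν(x)` for `x > 0`. -/
noncomputable def besselIr (ν x : ℝ) : ℝ :=
  (1 / (Real.sqrt Real.pi * Real.Gamma (ν + 1/2))) * (x / 2) ^ ν *
    ∫ t in (-1:ℝ)..1, (1 - t ^ 2) ^ (ν - 1/2) * Real.exp (x * t)

/-- For `ν ≥ 1/2` and `Re z > 0`, `|I_ν(z)| ≤ |z / Re z|^ν I_ν(Re z)`. -/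
theorem abs_besselI_le (ν : ℝ) (hν : 1/2 ≤ ν) (z : ℂ) (hz : 0 < z.re) :
    ‖besselI ν z‖ ≤ (‖z‖ / z.re) ^ ν * besselIr ν z.re := by
  set x := z.re with hxdef
  have hx0 : 0 < x := hz
  have hΓ : 0 < Real.Gamma (ν + 1/2) := Real.Gamma_pos_of_pos (by linarith)
  have hπ : 0 < Real.sqrt Real.pi := Real.sqrt_pos.mpr Real.pi_pos
  set c : ℝ := 1 / (Real.sqrt Real.pi * Real.Gamma (ν + 1/2)) with hcdef
  have hc : 0 < c := by positivity
  have hzabs : 0 < ‖z‖ := hx0.trans_le (Complex.re_le_norm z)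
  -- the integral bound
  have hint : ‖∫ t in (-1:ℝ)..1,
      (((1 - t ^ 2 : ℝ) ^ (ν - 1/2) : ℝ) : ℂ) * Complex.exp (z * (t : ℂ))‖
      ≤ ∫ t in (-1:ℝ)..1, (1 - t ^ 2) ^ (ν - 1/2) * Real.exp (x * t) := by
    refine (intervalIntegral.norm_integral_le_integral_norm (by norm_num)).trans_eq ?_
    refine intervalIntegral.integral_congr fun t ht => ?_
    rw [Set.uIcc_of_le (by norm_num : (-1:ℝ) ≤ 1)] at ht
    have h1 : (0:ℝ) ≤ 1 - t ^ 2 := by nlinarith [ht.1, ht.2]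
    have h2 : (0:ℝ) ≤ (1 - t ^ 2) ^ (ν - 1/2) := Real.rpow_nonneg h1 _
    rw [norm_mul, Complex.norm_real, Real.norm_eq_abs, abs_of_nonneg h2,
      Complex.norm_exp]
    congr 1
    simp [Complex.mul_re, hxdef]
  have hIr : 0 ≤ ∫ t in (-1:ℝ)..1, (1 - t ^ 2) ^ (ν - 1/2) * Real.exp (x * t) := by
    refine intervalIntegral.integral_nonneg (by norm_num) fun t ht => ?_
    have h1 : (0:ℝ) ≤ 1 - t ^ 2 := by nlinarith [ht.1, ht.2]
    positivity
  -- abs of prefactor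
  have habs : ‖besselI ν z‖
      = c * (‖z‖ / 2) ^ ν * ‖∫ t in (-1:ℝ)..1,
        (((1 - t ^ 2 : ℝ) ^ (ν - 1/2) : ℝ) : ℂ) * Complex.exp (z * (t : ℂ))‖ := by
    rw [besselI, norm_mul, norm_mul, Complex.norm_cpow_real]
    congr 2
    · rw [norm_div, norm_one, norm_mul, Complex.norm_real, Complex.norm_real, Real.norm_eq_abs, Real.norm_eq_abs,
        abs_of_nonneg hπ.le, abs_of_nonneg hΓ.le]
    · rw [norm_div, Complex.norm_two]
  have hsplit : (‖z‖ / 2) ^ ν = (‖z‖ / x) ^ ν * (x / 2) ^ ν := by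
    rw [← Real.mul_rpow (by positivity) (by positivity)]
    congr 1
    field_simp
  rw [habs, besselIr, hsplit]
  have hA : 0 ≤ ‖∫ t in (-1:ℝ)..1,
      (((1 - t ^ 2 : ℝ) ^ (ν - 1/2) : ℝ) : ℂ) * Complex.exp (z * (t : ℂ))‖ :=
    norm_nonneg _
  have hfac : 0 ≤ c * ((‖z‖ / x) ^ ν * (x / 2) ^ ν) := by positivity
  calc c * ((‖z‖ / x) ^ ν * (x / 2) ^ ν) * ‖∫ t in (-1:ℝ)..1,
        (((1 - t ^ 2 : ℝ) ^ (ν - 1/2) : ℝ) : ℂ) * Complex.exp (z * (t : ℂ))‖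
      ≤ c * ((‖z‖ / x) ^ ν * (x / 2) ^ ν) *
        ∫ t in (-1:ℝ)..1, (1 - t ^ 2) ^ (ν - 1/2) * Real.exp (x * t) :=
        mul_le_mul_of_nonneg_left hint hfac
    _ = (‖z‖ / x) ^ ν * (c * (x / 2) ^ ν *
        ∫ t in (-1:ℝ)..1, (1 - t ^ 2) ^ (ν - 1/2) * Real.exp (x * t)) := by ring
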